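/- For every natural number t ≥ 1 and every k₀ with 0 ≤ k₀ ≤ ⌊t/2⌋, the alternating sum ∑_{i=0}^{⌊t/2⌋ − k₀} (−1)^i · C(t − 2k₀, 2i) · (2i − 1)!! · (2t − 2k₀ − 2i − 1)!! equals t! / (2k₀)!!. -/
import Mathlib


open scoped Nat
open Finset

/-- Even-indexed alternating double factorial sum. -/
private def Fs (n j : ℕ) : ℤ :=
  ∑ i ∈ range (n + 1),
    (-1 : ℤ) ^ i * (n.choose (2 * i) : ℤ) * ((2 * i - 1)‼ : ℤ) *
      ((2 * n + 2 * j - 2 * i - 1)‼ : ℤ)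

/-- Odd-indexed alternating double factorial sum. -/
private def Gs (n j : ℕ) : ℤ :=
  ∑ i ∈ range (n + 1),
    (-1 : ℤ) ^ i * (n.choose (2 * i + 1) : ℤ) * ((2 * i + 1)‼ : ℤ) *
      ((2 * n + 2 * j - 2 * i - 1)‼ : ℤ)

private lemma dfac_odd_succ (i : ℕ) : (2 * i + 1)‼ = (2 * i + 1) * (2 * i - 1)‼ := by
  cases i with
  | zero => rfl
  | succ i =>
    have h1 : 2 * (i + 1) + 1 = (2 * i + 1) + 2 := by omega
    have h2 : 2 * (i + 1) - 1 = 2 * i + 1 := by omega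
    rw [h1, h2, Nat.doubleFactorial_add_two]

private lemma Fs_succ (n j : ℕ) : Fs (n + 1) j = Fs n (j + 1) - Gs n j := by
  have hFext : (∑ i ∈ range (n + 2),
        (-1 : ℤ) ^ i * (n.choose (2 * i) : ℤ) * ((2 * i - 1)‼ : ℤ) *
          ((2 * n + 2 * (j + 1) - 2 * i - 1)‼ : ℤ)) = Fs n (j + 1) := by
    rw [Finset.sum_range_succ, Fs]
    have hz : n.choose (2 * (n + 1)) = 0 := Nat.choose_eq_zero_of_lt (by omega)
    rw [hz]
    push_cast
    ring
  rw [← hFext, Finset.sum_range_succ', Fs, Finset.sum_range_succ', Gs]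
  have hterm : ∀ i ∈ range (n + 1),
      (-1 : ℤ) ^ (i + 1) * ((n + 1).choose (2 * (i + 1)) : ℤ) * ((2 * (i + 1) - 1)‼ : ℤ) *
          ((2 * (n + 1) + 2 * j - 2 * (i + 1) - 1)‼ : ℤ) =
        (-1 : ℤ) ^ (i + 1) * (n.choose (2 * (i + 1)) : ℤ) * ((2 * (i + 1) - 1)‼ : ℤ) *
            ((2 * n + 2 * (j + 1) - 2 * (i + 1) - 1)‼ : ℤ) -
          (-1 : ℤ) ^ i * (n.choose (2 * i + 1) : ℤ) * ((2 * i + 1)‼ : ℤ) *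
            ((2 * n + 2 * j - 2 * i - 1)‼ : ℤ) := by
    intro i _
    have hp : (n + 1).choose (2 * (i + 1)) = n.choose (2 * i + 1) + n.choose (2 * (i + 1)) := by
      have h : 2 * (i + 1) = (2 * i + 1) + 1 := by omega
      rw [h, Nat.choose_succ_succ]
    have ha1 : 2 * (n + 1) + 2 * j - 2 * (i + 1) - 1 = 2 * n + 2 * j - 2 * i - 1 := by omega
    have ha2 : 2 * n + 2 * (j + 1) - 2 * (i + 1) - 1 = 2 * n + 2 * j - 2 * i - 1 := by omega
    have ha3 : 2 * (i + 1) - 1 = 2 * i + 1 := by omega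
    rw [hp, ha1, ha2, ha3]
    push_cast
    ring
  rw [Finset.sum_congr rfl hterm, Finset.sum_sub_distrib]
  have h0 : 2 * (n + 1) + 2 * j - 2 * 0 - 1 = 2 * n + 2 * (j + 1) - 2 * 0 - 1 := by omega
  rw [h0]
  norm_num
  ring

private lemma Gs_succ (n j : ℕ) :
    Gs (n + 1) j = Gs n (j + 1) + (2 * n + 2 * j + 4) * Fs n (j + 1) - Fs n (j + 2) := by
  have hGext : Gs (n + 1) j =
      ∑ i ∈ range (n + 1),
        (-1 : ℤ) ^ i * ((n + 1).choose (2 * i + 1) : ℤ) * ((2 * i + 1)‼ : ℤ) *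
          ((2 * (n + 1) + 2 * j - 2 * i - 1)‼ : ℤ) := by
    rw [Gs, Finset.sum_range_succ]
    have hz : (n + 1).choose (2 * (n + 1) + 1) = 0 := Nat.choose_eq_zero_of_lt (by omega)
    rw [hz]
    push_cast
    ring
  rw [hGext]
  have hterm : ∀ i ∈ range (n + 1),
      (-1 : ℤ) ^ i * ((n + 1).choose (2 * i + 1) : ℤ) * ((2 * i + 1)‼ : ℤ) *
          ((2 * (n + 1) + 2 * j - 2 * i - 1)‼ : ℤ) =
        ((-1 : ℤ) ^ i * (n.choose (2 * i + 1) : ℤ) * ((2 * i + 1)‼ : ℤ) *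
            ((2 * n + 2 * (j + 1) - 2 * i - 1)‼ : ℤ)) +
          ((2 * (n : ℤ) + 2 * j + 4) *
              ((-1 : ℤ) ^ i * (n.choose (2 * i) : ℤ) * ((2 * i - 1)‼ : ℤ) *
                ((2 * n + 2 * (j + 1) - 2 * i - 1)‼ : ℤ)) -
            (-1 : ℤ) ^ i * (n.choose (2 * i) : ℤ) * ((2 * i - 1)‼ : ℤ) *
              ((2 * n + 2 * (j + 2) - 2 * i - 1)‼ : ℤ)) := by
    intro i hi
    rw [Finset.mem_range] at hi
    have hp : (n + 1).choose (2 * i + 1) = n.choose (2 * i) + n.choose (2 * i + 1) :=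
      Nat.choose_succ_succ _ _
    have ha1 : 2 * (n + 1) + 2 * j - 2 * i - 1 = 2 * n + 2 * (j + 1) - 2 * i - 1 := by omega
    have ha2 : 2 * n + 2 * (j + 2) - 2 * i - 1 =
        (2 * n + 2 * (j + 1) - 2 * i - 1) + 2 := by omega
    rw [hp, ha1, ha2, Nat.doubleFactorial_add_two, dfac_odd_succ]
    have ha3 : ((2 * n + 2 * (j + 1) - 2 * i - 1 + 2 : ℕ) : ℤ) = 2 * n + 2 * j + 3 - 2 * i := by
      omega
    push_cast [ha3]
    ring
  rw [Finset.sum_congr rfl hterm, Finset.sum_add_distrib, Finset.sum_sub_distrib,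
    ← Finset.mul_sum]
  rw [Gs, Fs, Fs]
  push_cast
  ring

private lemma Fs_zero (j : ℕ) : Fs 0 j = ((2 * j - 1)‼ : ℤ) := by
  simp [Fs]

private lemma Gs_zero (j : ℕ) : Gs 0 j = 0 := by
  simp [Gs]

private lemma main_ind (n : ℕ) : ∀ j : ℕ,
    ((2 : ℤ) ^ j * (j ! : ℤ)) * Fs n j = ((n + 2 * j)! : ℤ) ∧
      ((2 : ℤ) ^ (j + 1) * ((j + 1)! : ℤ)) * Gs n j = (n : ℤ) * ((n + 2 * j + 1)! : ℤ) := by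
  induction n with
  | zero =>
    intro j
    constructor
    · rw [Fs_zero]
      have key : ((2 * j)! : ℤ) = ((2 : ℤ) ^ j * (j ! : ℤ)) * ((2 * j - 1)‼ : ℤ) := by
        cases j with
        | zero => norm_num
        | succ j =>
          have h1 : 2 * (j + 1) = (2 * j + 1) + 1 := by omega
          have h2 : 2 * (j + 1) - 1 = 2 * j + 1 := by omega
          rw [h2, h1, Nat.factorial_eq_mul_doubleFactorial]
          have h3 : (2 * j + 1 + 1)‼ = 2 ^ (j + 1) * (j + 1)! := by
            have h4 : 2 * j + 1 + 1 = 2 * (j + 1) := by omega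
            rw [h4, Nat.doubleFactorial_two_mul]
          rw [h3]
          push_cast
          ring
      have e : 0 + 2 * j = 2 * j := by omega
      rw [e, key]
    · rw [Gs_zero]
      simp
  | succ n ih =>
    intro j
    have hF1 := (ih (j + 1)).1
    have hF2 := (ih (j + 2)).1
    have hG0 := (ih j).2
    have hG1 := (ih (j + 1)).2
    constructor
    · rw [Fs_succ]
      have hc : (2 : ℤ) * (j + 1) ≠ 0 := by positivity
      apply mul_left_cancel₀ hc
      have hfac : ((n + 1 + 2 * j)! : ℤ) * (2 * ((j : ℤ) + 1)) =
          ((n + 2 * (j + 1))! : ℤ) - (n : ℤ) * ((n + 2 * j + 1)! : ℤ) := by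
        have e1 : n + 2 * (j + 1) = (n + 2 * j) + 1 + 1 := by omega
        have e2 : n + 1 + 2 * j = (n + 2 * j) + 1 := by omega
        have e3 : n + 2 * j + 1 = (n + 2 * j) + 1 := by omega
        rw [e1, e2, e3]
        simp only [Nat.factorial_succ]
        push_cast
        ring
      calc (2 * ((j : ℤ) + 1)) * (((2 : ℤ) ^ j * (j ! : ℤ)) * (Fs n (j + 1) - Gs n j))
          = ((2 : ℤ) ^ (j + 1) * ((j + 1)! : ℤ)) * Fs n (j + 1) -
              ((2 : ℤ) ^ (j + 1) * ((j + 1)! : ℤ)) * Gs n j := by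
            simp only [Nat.factorial_succ]; push_cast; ring
        _ = ((n + 2 * (j + 1))! : ℤ) - (n : ℤ) * ((n + 2 * j + 1)! : ℤ) := by
            rw [hF1, hG0]
        _ = (2 * ((j : ℤ) + 1)) * ((n + 1 + 2 * j)! : ℤ) := by rw [← hfac]; ring
    · rw [Gs_succ]
      have hc : (2 : ℤ) * (j + 2) ≠ 0 := by positivity
      apply mul_left_cancel₀ hc
      have hfac : (2 * ((j : ℤ) + 2)) * (((n : ℤ) + 1) * ((n + 1 + 2 * j + 1)! : ℤ)) =
          (n : ℤ) * ((n + 2 * (j + 1) + 1)! : ℤ) +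
            (2 * ((j : ℤ) + 2)) * ((2 * (n : ℤ) + 2 * j + 4) * ((n + 2 * (j + 1))! : ℤ)) -
            ((n + 2 * (j + 2))! : ℤ) := by
        have e1 : n + 2 * (j + 1) + 1 = ((n + 2 * j) + 1) + 1 + 1 := by omega
        have e2 : n + 2 * (j + 2) = (((n + 2 * j) + 1) + 1 + 1) + 1 := by omega
        have e3 : n + 1 + 2 * j + 1 = ((n + 2 * j) + 1) + 1 := by omega
        have e4 : n + 2 * (j + 1) = ((n + 2 * j) + 1) + 1 := by omega
        rw [e1, e2, e3, e4]
        simp only [Nat.factorial_succ]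
        push_cast
        ring
      calc (2 * ((j : ℤ) + 2)) * (((2 : ℤ) ^ (j + 1) * ((j + 1)! : ℤ)) *
              (Gs n (j + 1) + (2 * (n : ℤ) + 2 * (j : ℤ) + 4) * Fs n (j + 1) - Fs n (j + 2)))
          = ((2 : ℤ) ^ (j + 1 + 1) * ((j + 1 + 1)! : ℤ)) * Gs n (j + 1) +
              (2 * ((j : ℤ) + 2)) * ((2 * (n : ℤ) + 2 * j + 4) *
                (((2 : ℤ) ^ (j + 1) * ((j + 1)! : ℤ)) * Fs n (j + 1))) -
              ((2 : ℤ) ^ (j + 2) * ((j + 2)! : ℤ)) * Fs n (j + 2) := by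
            have e5 : j + 2 = j + 1 + 1 := rfl
            rw [e5]
            simp only [Nat.factorial_succ]
            push_cast
            ring
        _ = (n : ℤ) * ((n + 2 * (j + 1) + 1)! : ℤ) +
              (2 * ((j : ℤ) + 2)) * ((2 * (n : ℤ) + 2 * j + 4) * ((n + 2 * (j + 1))! : ℤ)) -
              ((n + 2 * (j + 2))! : ℤ) := by rw [hG1, hF1, hF2]
        _ = (2 * ((j : ℤ) + 2)) * (((n : ℤ) + 1) * ((n + 1 + 2 * j + 1)! : ℤ)) := by
            rw [hfac]

/-- For `t ≥ 1` and `0 ≤ k₀ ≤ ⌊t/2⌋`,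
`(2k₀)‼ ∑_{i=0}^{⌊t/2⌋−k₀} (−1)^i C(t−2k₀, 2i) (2i−1)‼ (2t−2k₀−2i−1)‼ = t!`,
with the double factorial convention `(−1)‼ = 0‼ = 1` (realized by truncated
subtraction in ℕ). -/
theorem alternating_doubleFactorial_sum (t k₀ : ℕ) (ht : 1 ≤ t) (hk : k₀ ≤ t / 2) :
    ((2 * k₀)‼ : ℤ) * ∑ i ∈ Finset.range (t / 2 - k₀ + 1),
        (-1 : ℤ) ^ i * ((t - 2 * k₀).choose (2 * i) : ℤ) *
          ((2 * i - 1)‼ : ℤ) * ((2 * t - 2 * k₀ - 2 * i - 1)‼ : ℤ) =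
      (t ! : ℤ) := by
  have h2k : 2 * k₀ ≤ t := by omega
  set n := t - 2 * k₀ with hn
  have hteq : t = n + 2 * k₀ := by omega
  have hrange : t / 2 - k₀ + 1 = n / 2 + 1 := by omega
  have hcong : ∀ i ∈ Finset.range (n / 2 + 1),
      (-1 : ℤ) ^ i * ((t - 2 * k₀).choose (2 * i) : ℤ) *
          ((2 * i - 1)‼ : ℤ) * ((2 * t - 2 * k₀ - 2 * i - 1)‼ : ℤ) =
        (-1 : ℤ) ^ i * (n.choose (2 * i) : ℤ) * ((2 * i - 1)‼ : ℤ) *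
          ((2 * n + 2 * k₀ - 2 * i - 1)‼ : ℤ) := by
    intro i _
    have harg : 2 * t - 2 * k₀ - 2 * i - 1 = 2 * n + 2 * k₀ - 2 * i - 1 := by omega
    rw [← hn, harg]
  rw [hrange, Finset.sum_congr rfl hcong]
  have hext : (∑ i ∈ Finset.range (n / 2 + 1),
        (-1 : ℤ) ^ i * (n.choose (2 * i) : ℤ) * ((2 * i - 1)‼ : ℤ) *
          ((2 * n + 2 * k₀ - 2 * i - 1)‼ : ℤ)) = Fs n k₀ := by
    rw [Fs]
    apply Finset.sum_subset
    · exact Finset.range_subset_range.mpr (by omega)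
    · intro i _ hi
      rw [Finset.mem_range] at hi
      have hz : n.choose (2 * i) = 0 := Nat.choose_eq_zero_of_lt (by omega)
      rw [hz]
      push_cast
      ring
  rw [hext]
  have hdf : ((2 * k₀)‼ : ℤ) = (2 : ℤ) ^ k₀ * (k₀ ! : ℤ) := by
    rw [Nat.doubleFactorial_two_mul]; push_cast; ring
  rw [hdf, (main_ind n k₀).1, hteq]
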